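/- Let S0 and S1 be nonempty finite subsets of ℝ² in general position. Then S0 and S1 have an outer common tangent if and only if neither the convex hull of S0 is contained in the convex hull of S1 nor the convex hull of S1 is contained in the convex hull of S0. -/

import Mathlib

/-- Finite sets `S0, S1 ⊆ ℝ²` are in *general position* if they are disjoint
and no three distinct points of `S0 ∪ S1` are collinear. -/
def InGeneralPosition (S0 S1 : Set (ℝ × ℝ)) : Prop :=
  S0 ∩ S1 = ∅ ∧
    ∀ a ∈ S0 ∪ S1, ∀ b ∈ S0 ∪ S1, ∀ c ∈ S0 ∪ S1,
      a ≠ b → a ≠ c → b ≠ c → ¬ Collinear ℝ ({a, b, c} : Set (ℝ × ℝ))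

/-- The line `{x | f x = c}` is an *outer common tangent* of `S0` and `S1` if
it intersects the convex hulls of both sets and `S0 ∪ S1` is contained in one
of the two closed half-planes of the line. -/
def IsOuterCommonTangent (f : ℝ × ℝ →ₗ[ℝ] ℝ) (c : ℝ) (S0 S1 : Set (ℝ × ℝ)) : Prop :=
  ({x | f x = c} ∩ convexHull ℝ S0).Nonempty ∧
  ({x | f x = c} ∩ convexHull ℝ S1).Nonempty ∧
    (S0 ∪ S1 ⊆ {x | f x ≤ c} ∨ S0 ∪ S1 ⊆ {x | c ≤ f x})


lemma lin_apply (f : ℝ × ℝ →ₗ[ℝ] ℝ) (x : ℝ × ℝ) :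
    f x = f (1, 0) * x.1 + f (0, 1) * x.2 := by
  have hx : x = x.1 • ((1:ℝ), (0:ℝ)) + x.2 • ((0:ℝ), (1:ℝ)) := by
    simp [Prod.ext_iff]
  calc f x = f (x.1 • ((1:ℝ), (0:ℝ)) + x.2 • ((0:ℝ), (1:ℝ))) := by rw [← hx]
    _ = _ := by rw [map_add, map_smul, map_smul, smul_eq_mul, smul_eq_mul]; ring

lemma collinear_line (f : ℝ × ℝ →ₗ[ℝ] ℝ) (hf : f ≠ 0) (c : ℝ) :
    Collinear ℝ {x : ℝ × ℝ | f x = c} := by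
  set p := f (1, 0) with hp
  set q := f (0, 1) with hq
  have hpq : ¬ (p = 0 ∧ q = 0) := by
    rintro ⟨h1, h2⟩
    apply hf
    apply LinearMap.ext
    intro x
    rw [LinearMap.zero_apply, lin_apply f x, ← hp, ← hq, h1, h2]; simp
  have hden : p ^ 2 + q ^ 2 ≠ 0 := by
    intro h
    exact hpq ⟨by nlinarith [sq_nonneg p, sq_nonneg q], by nlinarith [sq_nonneg p, sq_nonneg q]⟩
  rcases Set.eq_empty_or_nonempty {x : ℝ × ℝ | f x = c} with he | ⟨p₀, hp₀⟩
  · rw [he]; exact collinear_empty ℝ _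
  · rw [collinear_iff_exists_forall_eq_smul_vadd]
    refine ⟨p₀, (-q, p), fun x hx => ?_⟩
    have h0 : p * (x.1 - p₀.1) + q * (x.2 - p₀.2) = 0 := by
      have h1 : f x = c := hx
      have h2 : f p₀ = c := hp₀
      rw [lin_apply f x, ← hp, ← hq] at h1
      rw [lin_apply f p₀, ← hp, ← hq] at h2
      nlinarith [h1, h2]
    refine ⟨(p * (x.2 - p₀.2) - q * (x.1 - p₀.1)) / (p ^ 2 + q ^ 2), ?_⟩
    have : ((p * (x.2 - p₀.2) - q * (x.1 - p₀.1)) / (p ^ 2 + q ^ 2)) • ((-q, p) : ℝ × ℝ) +ᵥ p₀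
        = (((p * (x.2 - p₀.2) - q * (x.1 - p₀.1)) / (p ^ 2 + q ^ 2)) * (-q) + p₀.1,
           ((p * (x.2 - p₀.2) - q * (x.1 - p₀.1)) / (p ^ 2 + q ^ 2)) * p + p₀.2) := by
      simp [Prod.ext_iff]
    rw [this]
    refine Prod.ext ?_ ?_
    · show x.1 = _
      field_simp
      linear_combination p * h0
    · show x.2 = _
      field_simp
      linear_combination q * h0

lemma mem_convexHull_face {T : Set (ℝ × ℝ)} (f : ℝ × ℝ →ₗ[ℝ] ℝ) {c : ℝ}
    (hT : ∀ t ∈ T, f t ≤ c) {x : ℝ × ℝ} (hx : x ∈ convexHull ℝ T) (hfx : f x = c) :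
    x ∈ convexHull ℝ {t | t ∈ T ∧ f t = c} := by
  classical
  rw [convexHull_eq] at hx
  obtain ⟨ι, t, w, z, hw0, hw1, hz, hcm⟩ := hx
  have hxe : x = ∑ i ∈ t, w i • z i := by
    rw [← hcm, Finset.centerMass_eq_of_sum_1 _ _ hw1]
  have hfs : f x = ∑ i ∈ t, w i * f (z i) := by
    rw [hxe, map_sum]
    refine Finset.sum_congr rfl fun i hi => ?_
    rw [map_smul, smul_eq_mul]
  have hle : ∀ i ∈ t, w i * f (z i) ≤ w i * c := fun i hi =>
    mul_le_mul_of_nonneg_left (hT _ (hz i hi)) (hw0 i hi)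
  have hsumc : ∑ i ∈ t, w i * c = c := by rw [← Finset.sum_mul, hw1, one_mul]
  have heq : ∀ i ∈ t, w i * f (z i) = w i * c :=
    (Finset.sum_eq_sum_iff_of_le hle).1 (by rw [← hfs, hfx, hsumc])
  have key : ∀ i ∈ t, w i ≠ 0 → f (z i) = c := fun i hi hne =>
    mul_left_cancel₀ hne (heq i hi)
  have hsum' : ∑ i ∈ t.filter (fun i => w i ≠ 0), w i = 1 := by
    rw [Finset.sum_filter_ne_zero, hw1]
  have hx' : (t.filter (fun i => w i ≠ 0)).centerMass w z = x := by
    rw [← hcm]; exact Finset.centerMass_filter_ne_zero z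
  rw [← hx']
  refine Finset.centerMass_mem_convexHull _
    (fun i hi => hw0 i (Finset.mem_filter.1 hi).1) (by rw [hsum']; norm_num) (fun i hi => ?_)
  obtain ⟨hit, hwne⟩ := Finset.mem_filter.1 hi
  exact ⟨hz i hit, key i hit hwne⟩

lemma InGeneralPosition.symm {S0 S1 : Set (ℝ × ℝ)} (h : InGeneralPosition S0 S1) :
    InGeneralPosition S1 S0 := by
  obtain ⟨h1, h2⟩ := h
  refine ⟨by rw [Set.inter_comm]; exact h1, ?_⟩
  rw [Set.union_comm]; exact h2

lemma fwd_aux {S0 S1 : Set (ℝ × ℝ)} (hgen : InGeneralPosition S0 S1)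
    (f : ℝ × ℝ →ₗ[ℝ] ℝ) (hf : f ≠ 0) (c : ℝ)
    (h0 : ({x | f x = c} ∩ convexHull ℝ S0).Nonempty)
    (hs0 : ∀ x ∈ S0, f x ≤ c) (hs1 : ∀ x ∈ S1, f x ≤ c)
    (hsub : convexHull ℝ S0 ⊆ convexHull ℝ S1) : False := by
  obtain ⟨y, hyl, hyh⟩ := h0
  -- get a point of S0 on the line
  have hy0 : y ∈ convexHull ℝ {t | t ∈ S0 ∧ f t = c} := mem_convexHull_face f hs0 hyh hyl
  have hW0ne : {t | t ∈ S0 ∧ f t = c}.Nonempty := by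
    by_contra h
    rw [Set.not_nonempty_iff_eq_empty] at h
    rw [h, convexHull_empty] at hy0
    exact hy0
  obtain ⟨a, haS0, hafc⟩ := hW0ne
  have haS1 : a ∉ S1 := fun h => by
    have : a ∈ S0 ∩ S1 := ⟨haS0, h⟩
    rw [hgen.1] at this; exact this
  -- a is in hull S1, on the line
  have ha1 : a ∈ convexHull ℝ S1 := hsub (subset_convexHull ℝ S0 haS0)
  have ha1' : a ∈ convexHull ℝ {t | t ∈ S1 ∧ f t = c} := mem_convexHull_face f hs1 ha1 hafc
  have hW1ne : {t | t ∈ S1 ∧ f t = c}.Nonempty := by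
    by_contra h
    rw [Set.not_nonempty_iff_eq_empty] at h
    rw [h, convexHull_empty] at ha1'
    exact ha1'
  obtain ⟨b1, hb1S, hb1c⟩ := hW1ne
  by_cases hsingle : ∀ b ∈ {t | t ∈ S1 ∧ f t = c}, b = b1
  · have : {t | t ∈ S1 ∧ f t = c} ⊆ {b1} := fun b hb => hsingle b hb
    have := convexHull_mono this ha1'
    rw [convexHull_singleton] at this
    exact haS1 (this ▸ hb1S)
  · push_neg at hsingle
    obtain ⟨b2, ⟨hb2S, hb2c⟩, hb2ne⟩ := hsingle
    have hcol : Collinear ℝ ({a, b1, b2} : Set (ℝ × ℝ)) := by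
      refine Collinear.subset ?_ (collinear_line f hf c)
      rintro x (rfl | rfl | rfl)
      · exact hafc
      · exact hb1c
      · exact hb2c
    exact hgen.2 a (Or.inl haS0) b1 (Or.inr hb1S) b2 (Or.inr hb2S)
      (fun h => haS1 (h ▸ hb1S)) (fun h => haS1 (h ▸ hb2S)) hb2ne.symm hcol

noncomputable def Fdir (θ : ℝ) : ℝ × ℝ →ₗ[ℝ] ℝ :=
  Real.cos θ • LinearMap.fst ℝ ℝ ℝ + Real.sin θ • LinearMap.snd ℝ ℝ ℝ

lemma Fdir_apply (θ : ℝ) (x : ℝ × ℝ) :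
    Fdir θ x = Real.cos θ * x.1 + Real.sin θ * x.2 := by
  simp [Fdir]

lemma Fdir_ne_zero (θ : ℝ) : Fdir θ ≠ 0 := by
  intro h
  have h1 : Fdir θ (Real.cos θ, Real.sin θ) = 0 := by rw [h]; rfl
  rw [Fdir_apply] at h1
  simp only at h1
  nlinarith [Real.sin_sq_add_cos_sq θ]

lemma continuous_sup' {ι : Type*} (s : Finset ι) (hs : s.Nonempty) (g : ι → ℝ → ℝ)
    (hg : ∀ i, Continuous (g i)) :
    Continuous (fun θ => s.sup' hs (fun i => g i θ)) := by
  induction hs using Finset.Nonempty.cons_induction with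
  | singleton a => simpa using hg a
  | cons a s h hs ih =>
    have : (fun θ => (Finset.cons a s h).sup' (Finset.cons_nonempty h) (fun i => g i θ))
        = fun θ => max (g a θ) (s.sup' hs (fun i => g i θ)) := by
      funext θ
      rw [Finset.sup'_cons hs]

    rw [this]
    exact (hg a).max ih

lemma exists_dir {S T : Set (ℝ × ℝ)} (hS : S.Finite) (hT : T.Finite)
    (hSne : hS.toFinset.Nonempty) (hTne : hT.toFinset.Nonempty)
    {b : ℝ × ℝ} (hb : b ∈ T) (hbn : b ∉ convexHull ℝ S) :
    ∃ θ : ℝ, hS.toFinset.sup' hSne (fun x => Fdir θ x) <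
      hT.toFinset.sup' hTne (fun x => Fdir θ x) := by
  obtain ⟨f, u, hfu, hub⟩ := geometric_hahn_banach_closed_point
    (convex_convexHull ℝ S) ((hS.isCompact_convexHull (𝕜 := ℝ)).isClosed) hbn
  set p := f (1, 0) with hp
  set q := f (0, 1) with hq
  have hfx : ∀ x : ℝ × ℝ, f x = p * x.1 + q * x.2 := fun x => lin_apply f.toLinearMap x
  have hSsub : ∀ x ∈ S, f x < u := fun x hx => hfu x (subset_convexHull ℝ S hx)
  have hz : (⟨p, q⟩ : ℂ) ≠ 0 := by
    intro h
    obtain ⟨a, ha⟩ := hSne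
    rw [Set.Finite.mem_toFinset] at ha
    have h1 := hSsub a ha
    have h2 := hub
    rw [Complex.ext_iff] at h
    simp only [Complex.zero_re, Complex.zero_im] at h
    rw [hfx a, h.1, h.2] at h1
    rw [hfx b, h.1, h.2] at h2
    simp at h1 h2
    linarith
  set θ := Complex.arg ⟨p, q⟩ with hθ
  set r := ‖(⟨p, q⟩ : ℂ)‖ with hr
  have hrpos : 0 < r := by
    rw [hr]; exact norm_pos_iff.2 hz
  have hcos : Real.cos θ = p / r := by
    rw [hθ, hr, Complex.cos_arg hz]
  have hsin : Real.sin θ = q / r := by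
    rw [hθ, hr, Complex.sin_arg]
  have hFd : ∀ x : ℝ × ℝ, Fdir θ x = f x / r := by
    intro x
    rw [Fdir_apply, hcos, hsin, hfx x]
    field_simp
  refine ⟨θ, ?_⟩
  have h1 : hT.toFinset.sup' hTne (fun x => Fdir θ x) ≥ Fdir θ b := by
    apply Finset.le_sup'
    rw [Set.Finite.mem_toFinset]; exact hb
  have h2 : hS.toFinset.sup' hSne (fun x => Fdir θ x) < u / r := by
    rw [Finset.sup'_lt_iff]
    intro x hx
    rw [Set.Finite.mem_toFinset] at hx
    rw [hFd x]
    gcongr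
    exact hSsub x hx
  refine h2.trans_le (le_trans ?_ h1)
  rw [hFd b]
  gcongr

/-- Nonempty finite sets `S0` and `S1` in general position have an outer
common tangent if and only if neither convex hull is contained in the other. -/
theorem outerCommonTangent_iff_not_nested (S0 S1 : Set (ℝ × ℝ))
    (h0fin : S0.Finite) (h1fin : S1.Finite)
    (h0ne : S0.Nonempty) (h1ne : S1.Nonempty)
    (hgen : InGeneralPosition S0 S1) :
    (∃ (f : ℝ × ℝ →ₗ[ℝ] ℝ) (c : ℝ), f ≠ 0 ∧ IsOuterCommonTangent f c S0 S1) ↔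
      (¬ convexHull ℝ S0 ⊆ convexHull ℝ S1 ∧ ¬ convexHull ℝ S1 ⊆ convexHull ℝ S0) := by
  constructor
  · rintro ⟨f, c, hf, hl0, hl1, hside⟩
    have hneg : {x : ℝ × ℝ | (-f) x = -c} = {x | f x = c} := by
      ext x; simp [neg_eq_iff_eq_neg]
    constructor
    · intro hsub
      rcases hside with h | h
      · exact fwd_aux hgen f hf c hl0 (fun x hx => h (Or.inl hx)) (fun x hx => h (Or.inr hx)) hsub
      · refine fwd_aux hgen (-f) (neg_ne_zero.2 hf) (-c) (by rw [hneg]; exact hl0)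
          (fun x hx => ?_) (fun x hx => ?_) hsub
        · show (-f) x ≤ -c
          rw [LinearMap.neg_apply]
          exact neg_le_neg (h (Or.inl hx))
        · show (-f) x ≤ -c
          rw [LinearMap.neg_apply]
          exact neg_le_neg (h (Or.inr hx))
    · intro hsub
      rcases hside with h | h
      · exact fwd_aux hgen.symm f hf c hl1 (fun x hx => h (Or.inr hx)) (fun x hx => h (Or.inl hx)) hsub
      · refine fwd_aux hgen.symm (-f) (neg_ne_zero.2 hf) (-c) (by rw [hneg]; exact hl1)
          (fun x hx => ?_) (fun x hx => ?_) hsub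
        · show (-f) x ≤ -c
          rw [LinearMap.neg_apply]
          exact neg_le_neg (h (Or.inr hx))
        · show (-f) x ≤ -c
          rw [LinearMap.neg_apply]
          exact neg_le_neg (h (Or.inl hx))
  · rintro ⟨h01, h10⟩
    have ha : ∃ a ∈ S0, a ∉ convexHull ℝ S1 := by
      by_contra h
      push_neg at h
      exact h01 (convexHull_min (fun x hx => h x hx) (convex_convexHull ℝ S1))
    have hb : ∃ b ∈ S1, b ∉ convexHull ℝ S0 := by
      by_contra h
      push_neg at h
      exact h10 (convexHull_min (fun x hx => h x hx) (convex_convexHull ℝ S0))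
    obtain ⟨a, haS, han⟩ := ha
    obtain ⟨b, hbS, hbn⟩ := hb
    have hD0 : h0fin.toFinset.Nonempty := by
      rw [Set.Finite.toFinset_nonempty]; exact h0ne
    have hD1 : h1fin.toFinset.Nonempty := by
      rw [Set.Finite.toFinset_nonempty]; exact h1ne
    set m0 : ℝ → ℝ := fun θ => h0fin.toFinset.sup' hD0 (fun x => Fdir θ x) with hm0
    set m1 : ℝ → ℝ := fun θ => h1fin.toFinset.sup' hD1 (fun x => Fdir θ x) with hm1
    obtain ⟨θb, hθb⟩ := exists_dir h0fin h1fin hD0 hD1 hbS hbn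
    obtain ⟨θa, hθa⟩ := exists_dir h1fin h0fin hD1 hD0 haS han
    have hcF : ∀ i : ℝ × ℝ, Continuous (fun θ => Fdir θ i) := by
      intro i
      have : (fun θ => Fdir θ i) = fun θ => Real.cos θ * i.1 + Real.sin θ * i.2 := by
        funext θ; exact Fdir_apply θ i
      rw [this]
      exact (Real.continuous_cos.mul continuous_const).add
        (Real.continuous_sin.mul continuous_const)
    have hc0 : Continuous m0 := continuous_sup' _ hD0 (fun i θ => Fdir θ i) hcF
    have hc1 : Continuous m1 := continuous_sup' _ hD1 (fun i θ => Fdir θ i) hcF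
    have hg : Continuous (fun θ => m0 θ - m1 θ) := hc0.sub hc1
    have h0mem : (0 : ℝ) ∈ Set.uIcc (m0 θa - m1 θa) (m0 θb - m1 θb) := by
      rw [Set.mem_uIcc]
      right
      constructor
      · linarith [hθb]
      · linarith [hθa]
    obtain ⟨θ, _, hθ⟩ := intermediate_value_uIcc (hg.continuousOn) h0mem
    have hEq : m0 θ = m1 θ := by linarith [sub_eq_zero.1 hθ]
    refine ⟨Fdir θ, m0 θ, Fdir_ne_zero θ, ?_, ?_, Or.inl ?_⟩
    · obtain ⟨a0, ha0, hsup⟩ := Finset.exists_mem_eq_sup' hD0 (fun x => Fdir θ x)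
      rw [Set.Finite.mem_toFinset] at ha0
      exact ⟨a0, hsup.symm, subset_convexHull ℝ S0 ha0⟩
    · obtain ⟨a1, ha1, hsup⟩ := Finset.exists_mem_eq_sup' hD1 (fun x => Fdir θ x)
      rw [Set.Finite.mem_toFinset] at ha1
      refine ⟨a1, ?_, subset_convexHull ℝ S1 ha1⟩
      show Fdir θ a1 = m0 θ
      rw [hEq]; exact hsup.symm
    · rintro x (hx | hx)
      · show Fdir θ x ≤ m0 θ
        exact Finset.le_sup' (fun y => Fdir θ y) (h0fin.mem_toFinset.2 hx)
      · show Fdir θ x ≤ m0 θ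
        rw [hEq]
        exact Finset.le_sup' (fun y => Fdir θ y) (h1fin.mem_toFinset.2 hx)
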